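/- Let W ⊆ V be a nice space, let w ∈ W∖{0}, enumerate R(w) = {α₁,…,α_s}, let U be the s×s Gram matrix U_{pq} = ⟨α_p, α_q⟩, and suppose 0 does not belong to the convex hull of R(w). If there exist x₁,…,x_s with every x_i > 0 such that U x = (1,…,1)ᵀ, then mcc(R(w)) lies in the intrinsic interior of the convex hull of R(w), and consequently there exists X ∈ 𝔞 such that w̃ = exp(π(X))w satisfies π(m_𝔤(w̃))w̃ = ‖m_𝔤(w̃)‖² w̃ (i.e., the orbit of w is distinguished). -/

import Mathlib

open scoped InnerProductSpace
open Finset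
open scoped Classical

/-- The (restricted) moment map of a linear family of operators `π` on an inner
product space `V`: `momentMap π v` is the unique element of `E` with
`⟪momentMap π v, Y⟫ = ⟪π Y v, v⟫ / ‖v‖²` for all `Y`. -/
noncomputable def momentMap {E V : Type*} [NormedAddCommGroup E] [InnerProductSpace ℝ E]
    [FiniteDimensional ℝ E] [NormedAddCommGroup V] [InnerProductSpace ℝ V]
    (π : E →ₗ[ℝ] V →L[ℝ] V) (v : V) : E :=
  (InnerProductSpace.toDual ℝ E).symm <| LinearMap.toContinuousLinearMap
    { toFun := fun X => ⟪(π X) v, v⟫_ℝ / ‖v‖ ^ 2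
      map_add' := fun X Y => by
        simp [map_add, ContinuousLinearMap.add_apply, inner_add_left, add_div]
      map_smul' := fun c X => by
        simp [map_smul, ContinuousLinearMap.smul_apply, inner_smul_left, mul_div_assoc] }

/-- The weight space `V_α = {v : ∀ X ∈ 𝔞, π(X)v = ⟪α,X⟫v}`. -/
def wtSpace {E V : Type*} [NormedAddCommGroup E] [InnerProductSpace ℝ E]
    [NormedAddCommGroup V] [InnerProductSpace ℝ V]
    (π : E →ₗ[ℝ] V →L[ℝ] V) (𝔞 : Submodule ℝ E) (α : E) : Submodule ℝ V where
  carrier := {v | ∀ X ∈ 𝔞, (π X) v = ⟪α, X⟫_ℝ • v}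
  add_mem' := fun {a b} ha hb X hX => by rw [map_add, ha X hX, hb X hX, smul_add]
  zero_mem' := fun X hX => by simp
  smul_mem' := fun t a ha X hX => by rw [map_smul, ha X hX, smul_comm]

/-- The (restricted) root space `𝔤_γ = {Y : ∀ X ∈ 𝔞, [X,Y] = ⟪γ,X⟫Y}`. -/
def rootSpace {E : Type*} [NormedAddCommGroup E] [InnerProductSpace ℝ E]
    (bk : E →ₗ[ℝ] E →ₗ[ℝ] E) (𝔞 : Submodule ℝ E) (γ : E) : Submodule ℝ E where
  carrier := {Y | ∀ X ∈ 𝔞, bk X Y = ⟪γ, X⟫_ℝ • Y}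
  add_mem' := fun {a b} ha hb X hX => by rw [map_add, ha X hX, hb X hX, smul_add]
  zero_mem' := fun X hX => by simp
  smul_mem' := fun t a ha X hX => by rw [map_smul, ha X hX, smul_comm]

/-- A subspace `W ⊆ V` is `A`-invariant if `π(X)W ⊆ W` for all `X ∈ 𝔞`. -/
def AInvariant {E V : Type*} [NormedAddCommGroup E] [InnerProductSpace ℝ E]
    [NormedAddCommGroup V] [InnerProductSpace ℝ V]
    (π : E →ₗ[ℝ] V →L[ℝ] V) (𝔞 : Submodule ℝ E) (W : Submodule ℝ V) : Prop :=
  ∀ X ∈ 𝔞, ∀ w ∈ W, (π X) w ∈ W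

/-- An `A`-invariant subspace `W ⊆ V` is a nice space if `momentMap π w ∈ 𝔞` for
every nonzero `w ∈ W`. -/
def IsNiceSpace {E V : Type*} [NormedAddCommGroup E] [InnerProductSpace ℝ E]
    [FiniteDimensional ℝ E] [NormedAddCommGroup V] [InnerProductSpace ℝ V]
    (π : E →ₗ[ℝ] V →L[ℝ] V) (𝔞 : Submodule ℝ E) (W : Submodule ℝ V) : Prop :=
  AInvariant π 𝔞 W ∧ ∀ w ∈ W, w ≠ 0 → momentMap π w ∈ 𝔞


set_option maxHeartbeats 1000000

lemma momentMap_inner {E V : Type*} [NormedAddCommGroup E] [InnerProductSpace ℝ E]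
    [FiniteDimensional ℝ E] [NormedAddCommGroup V] [InnerProductSpace ℝ V]
    (π : E →ₗ[ℝ] V →L[ℝ] V) (v : V) (Y : E) :
    ⟪momentMap π v, Y⟫_ℝ = ⟪(π Y) v, v⟫_ℝ / ‖v‖ ^ 2 := by
  rw [momentMap, InnerProductSpace.toDual_symm_apply]
  rfl


lemma exp_apply_eq_tsum {V : Type*} [NormedAddCommGroup V] [InnerProductSpace ℝ V]
    [FiniteDimensional ℝ V] (A : V →L[ℝ] V) (v : V) :
    NormedSpace.exp A v = ∑' n : ℕ, ((n.factorial : ℝ)⁻¹) • (A ^ n) v := by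
  have : NormedSpace.exp A = ∑' n : ℕ, ((n.factorial : ℝ)⁻¹) • A ^ n := by
    rw [NormedSpace.exp_eq_tsum ℝ]
  rw [this]
  have hs : Summable fun n : ℕ => ((n.factorial : ℝ)⁻¹) • A ^ n :=
    NormedSpace.expSeries_summable' A
  have := (ContinuousLinearMap.apply ℝ V v).map_tsum hs
  simpa using this

lemma exp_apply_eigenvector {V : Type*} [NormedAddCommGroup V] [InnerProductSpace ℝ V]
    [FiniteDimensional ℝ V] (A : V →L[ℝ] V) (v : V) (r : ℝ) (h : A v = r • v) :
    NormedSpace.exp A v = Real.exp r • v := by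
  have hpow : ∀ n : ℕ, (A ^ n) v = r ^ n • v := by
    intro n
    induction n with
    | zero => simp
    | succ n ih =>
      rw [pow_succ, pow_succ, ContinuousLinearMap.mul_apply, h, map_smul, ih,
        smul_smul, mul_comm]
  rw [exp_apply_eq_tsum]
  have : ∀ n : ℕ, ((n.factorial : ℝ)⁻¹) • (A ^ n) v
      = (((n.factorial : ℝ)⁻¹) * r ^ n) • v := by
    intro n; rw [hpow, smul_smul]
  have hsum : Summable fun n : ℕ => ((n.factorial : ℝ)⁻¹ * r ^ n) := by
    exact NormedSpace.expSeries_summable' (𝕂 := ℝ) r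
  rw [tsum_congr this, hsum.tsum_smul_const]
  congr 1
  rw [Real.exp_eq_exp_ℝ, NormedSpace.exp_eq_tsum ℝ]
  simp [smul_eq_mul]

lemma exp_mem_of_invariant {V : Type*} [NormedAddCommGroup V] [InnerProductSpace ℝ V]
    [FiniteDimensional ℝ V] (A : V →L[ℝ] V) (W : Submodule ℝ V)
    (hW : ∀ w ∈ W, A w ∈ W) (w : V) (hw : w ∈ W) :
    NormedSpace.exp A w ∈ W := by
  have hpow : ∀ n : ℕ, (A ^ n) w ∈ W := by
    intro n
    induction n with
    | zero => simpa using hw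
    | succ n ih => rw [pow_succ', ContinuousLinearMap.mul_apply]; exact hW _ ih
  rw [exp_apply_eq_tsum]
  have hs : Summable fun n : ℕ => ((n.factorial : ℝ)⁻¹) • (A ^ n) w := by
    have hs0 : Summable fun n : ℕ => ((n.factorial : ℝ)⁻¹) • A ^ n :=
      NormedSpace.expSeries_summable' A
    have := ((ContinuousLinearMap.apply ℝ V w).hasSum hs0.hasSum)
    exact this.summable.congr (by intro n; simp)
  have hsum := hs.hasSum
  have hclosed : IsClosed (W : Set V) := W.closed_of_finiteDimensional
  refine hclosed.mem_of_tendsto hsum.tendsto_sum_nat ?_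
  filter_upwards with n
  exact Submodule.sum_mem W fun i _ => W.smul_mem _ (hpow i)

lemma exp_apply_ne_zero {V : Type*} [NormedAddCommGroup V] [InnerProductSpace ℝ V]
    [FiniteDimensional ℝ V] (A : V →L[ℝ] V) (w : V) (hw : w ≠ 0) :
    NormedSpace.exp A w ≠ 0 := by
  intro h
  have hcomm : Commute A (-A) := (Commute.refl A).neg_right
  have : NormedSpace.exp (-A) (NormedSpace.exp A w) = w := by
    have h1 : NormedSpace.exp (-A) * NormedSpace.exp A = 1 := by
      letI : NormedAlgebra ℚ (V →L[ℝ] V) := NormedAlgebra.restrictScalars ℚ ℝ (V →L[ℝ] V)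
      rw [← NormedSpace.exp_add_of_commute hcomm.symm, neg_add_cancel,
        NormedSpace.exp_zero]
    calc NormedSpace.exp (-A) (NormedSpace.exp A w)
        = (NormedSpace.exp (-A) * NormedSpace.exp A) w := rfl
      _ = w := by rw [h1]; rfl
  rw [h, map_zero] at this
  exact hw this.symm


lemma centerMass_mem_intrinsicInterior {𝔤 : Type*} [NormedAddCommGroup 𝔤]
    [InnerProductSpace ℝ 𝔤] [FiniteDimensional ℝ 𝔤]
    (Rw : Finset 𝔤) (c : 𝔤 → ℝ) (hc : ∀ α ∈ Rw, 0 < c α)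
    (hc1 : ∑ α ∈ Rw, c α = 1) (p : 𝔤) (hp : p = ∑ α ∈ Rw, c α • α) :
    p ∈ intrinsicInterior ℝ (convexHull ℝ (Rw : Set 𝔤)) := by
  -- p is in the hull
  have hphull : p ∈ convexHull ℝ (Rw : Set 𝔤) := by
    have h1 := Rw.centerMass_mem_convexHull (s := (Rw : Set 𝔤)) (w := c)
      (fun i hi => (hc i hi).le) (by rw [hc1]; norm_num) (z := id)
      (fun i hi => Finset.mem_coe.2 hi)
    have h2 : Rw.centerMass c id = p := by
      rw [Finset.centerMass_eq_of_sum_1 _ _ hc1]; simp [hp]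
    rwa [h2] at h1
  set S := affineSpan ℝ (convexHull ℝ (Rw : Set 𝔤)) with hS
  have hpS : p ∈ S := subset_affineSpan ℝ _ hphull
  set D := S.direction with hD
  -- each α - p lies in D
  have hαp : ∀ α ∈ Rw, α - p ∈ D := by
    intro α hα
    have h1 : α ∈ S := subset_affineSpan ℝ _ (subset_convexHull ℝ _ (by simpa using hα))
    simpa using AffineSubspace.vsub_mem_direction h1 hpS
  -- index type
  set ι := {a // a ∈ Rw} with hι
  -- the linear map T
  set T : (ι → ℝ) →ₗ[ℝ] 𝔤 :=
    { toFun := fun f => ∑ i : ι, f i • ((i : 𝔤) - p)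
      map_add' := fun f g => by
        simp [add_smul, Finset.sum_add_distrib]
      map_smul' := fun t f => by
        simp [smul_smul, Finset.smul_sum] } with hT
  have hTapp : ∀ f : ι → ℝ, T f = ∑ i : ι, f i • ((i : 𝔤) - p) := fun f => rfl
  have hTmem : ∀ f : ι → ℝ, T f ∈ D := fun f =>
    Submodule.sum_mem _ fun i _ => Submodule.smul_mem _ _ (hαp i i.2)
  -- T maps delta functions to α - p
  have hTdelta : ∀ j : ι, T (fun i => if i = j then (1:ℝ) else 0) = (j : 𝔤) - p := by
    intro j
    rw [hTapp]
    rw [Finset.sum_eq_single j]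
    · simp
    · intro i _ hij; simp [hij]
    · intro h; exact absurd (Finset.mem_univ j) h
  -- surjectivity of T onto D
  have hDle : D ≤ LinearMap.range T := by
    have hDeq : D = vectorSpan ℝ (Rw : Set 𝔤) := by
      rw [hD, hS, affineSpan_convexHull, direction_affineSpan]
    rw [hDeq, vectorSpan_def, Submodule.span_le]
    rintro v ⟨a, ha, b, hb, rfl⟩
    have ha' : a ∈ Rw := by simpa using ha
    have hb' : b ∈ Rw := by simpa using hb
    show a -ᵥ b ∈ (LinearMap.range T : Set 𝔤)
    have heq : a -ᵥ b = ((a : 𝔤) - p) - ((b : 𝔤) - p) := by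
      rw [vsub_eq_sub]; abel
    rw [heq]
    exact sub_mem (⟨_, hTdelta ⟨a, ha'⟩⟩ : _ ∈ LinearMap.range T)
      ⟨_, hTdelta ⟨b, hb'⟩⟩
  -- linear section σ of T
  set T' : (ι → ℝ) →ₗ[ℝ] ↥D := T.codRestrict D hTmem with hT'
  have hT'surj : LinearMap.range T' = ⊤ := by
    rw [LinearMap.range_eq_top]
    intro v
    obtain ⟨f, hf⟩ := hDle v.2
    exact ⟨f, Subtype.ext hf⟩
  obtain ⟨σ, hσ⟩ := T'.exists_rightInverse_of_surjective hT'surj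
  have hσT : ∀ v : ↥D, T (σ v) = (v : 𝔤) := by
    intro v
    have h := congrFun (congrArg DFunLike.coe hσ) v
    exact congrArg Subtype.val h
  have hσcont : Continuous σ := σ.continuous_of_finiteDimensional
  -- the open set O of good directions
  set lam : ↥D → ι → ℝ := fun v i => c i + σ v i - (∑ j : ι, σ v j) * c i with hlam
  have hlamcont : ∀ i : ι, Continuous fun v => lam v i := by
    intro i
    apply Continuous.sub
    · exact continuous_const.add ((continuous_apply i).comp hσcont)
    · exact (continuous_finset_sum _ fun j _ => (continuous_apply j).comp hσcont).mul
        continuous_const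
  set O : Set ↥D := ⋂ i : ι, (fun v => lam v i) ⁻¹' Set.Ioi 0 with hO
  have hOopen : IsOpen O := isOpen_iInter_of_finite fun i =>
    (hlamcont i).isOpen_preimage _ isOpen_Ioi
  have hO0 : (0 : ↥D) ∈ O := by
    rw [hO]
    refine Set.mem_iInter.2 fun i => ?_
    simp only [Set.mem_preimage, Set.mem_Ioi, hlam, map_zero]
    simpa using hc i i.2
  -- sums over the subtype
  have hsum_c : ∑ i : ι, c (i : 𝔤) = 1 := by rw [Finset.sum_coe_sort]; exact hc1
  have hsum_p : ∑ i : ι, c (i : 𝔤) • (i : 𝔤) = p := by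
    rw [Finset.sum_coe_sort Rw (fun a => c a • a), ← hp]
  -- for v ∈ O, p + v is in the hull
  have hkey : ∀ v : ↥D, v ∈ O → p + (v : 𝔤) ∈ convexHull ℝ (Rw : Set 𝔤) := by
    intro v hv
    have hvpos : ∀ i : ι, 0 < lam v i := by
      intro i
      have := Set.mem_iInter.1 hv i
      simpa using this
    have hsumlam : ∑ i : ι, lam v i = 1 := by
      simp only [hlam]
      rw [Finset.sum_sub_distrib, Finset.sum_add_distrib, hsum_c, ← Finset.mul_sum,
        hsum_c]
      ring
    have h1 : ∑ i : ι, σ v i • (i : 𝔤) = (v : 𝔤) + (∑ i : ι, σ v i) • p := by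
      have h0 := hσT v
      rw [hTapp] at h0
      simp only [smul_sub] at h0
      rw [Finset.sum_sub_distrib, ← Finset.sum_smul] at h0
      exact sub_eq_iff_eq_add.1 h0
    have hcomb : ∑ i : ι, lam v i • (i : 𝔤) = p + (v : 𝔤) := by
      calc ∑ i : ι, lam v i • (i : 𝔤)
          = (∑ i : ι, c (i:𝔤) • (i : 𝔤)) + (∑ i : ι, σ v i • (i : 𝔤))
            - ∑ i : ι, ((∑ j : ι, σ v j) * c (i:𝔤)) • (i : 𝔤) := by
            simp only [hlam, sub_smul, add_smul]
            rw [Finset.sum_sub_distrib, Finset.sum_add_distrib]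
        _ = p + ((v : 𝔤) + (∑ i : ι, σ v i) • p) - (∑ j : ι, σ v j) • p := by
            rw [hsum_p, h1]
            congr 1
            simp only [mul_smul]
            rw [← Finset.smul_sum, hsum_p]
        _ = p + (v : 𝔤) := by abel
    have hmem2 := Finset.centerMass_mem_convexHull (t := (Finset.univ : Finset ι))
      (s := (Rw : Set 𝔤)) (w := lam v) (fun i _ => (hvpos i).le)
      (by rw [hsumlam]; norm_num) (z := fun i => (i : 𝔤))
      (fun i _ => Finset.mem_coe.2 i.2)
    rwa [Finset.centerMass_eq_of_sum_1 _ _ hsumlam, hcomb] at hmem2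
  -- assemble
  rw [mem_intrinsicInterior]
  have hmem : ∀ y : ↥(S : Set 𝔤), (y : 𝔤) - p ∈ D := by
    intro y
    simpa using AffineSubspace.vsub_mem_direction y.2 hpS
  set Φ : ↥(S : Set 𝔤) → ↥D := fun y => ⟨(y : 𝔤) - p, hmem y⟩ with hΦ
  have hΦcont : Continuous Φ :=
    Continuous.subtype_mk (continuous_subtype_val.sub continuous_const) _
  refine ⟨⟨p, hpS⟩, ?_, rfl⟩
  rw [mem_interior]
  refine ⟨Φ ⁻¹' O, ?_, hΦcont.isOpen_preimage _ hOopen, ?_⟩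
  · intro y hy
    have := hkey (Φ y) hy
    simpa [hΦ] using this
  · show Φ ⟨p, hpS⟩ ∈ O
    have : Φ ⟨p, hpS⟩ = 0 := Subtype.ext (by simp [hΦ])
    rw [this]; exact hO0


lemma gram_min_exists {𝔤 : Type*} [NormedAddCommGroup 𝔤]
    [InnerProductSpace ℝ 𝔤] [FiniteDimensional ℝ 𝔤]
    (Rw : Finset 𝔤) (hne : Rw.Nonempty) (p : 𝔤) (c : 𝔤 → ℝ)
    (hc : ∀ α ∈ Rw, 0 < c α) (hp : p = ∑ α ∈ Rw, c α • α)
    (hc1 : ∑ α ∈ Rw, c α = 1)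
    (k0 : 𝔤 → ℝ) (hk0 : ∀ α ∈ Rw, 0 < k0 α) :
    ∃ X ∈ Submodule.span ℝ ((fun α => α - p) '' (Rw : Set 𝔤)),
      ∑ α ∈ Rw, (k0 α * Real.exp (2 * ⟪α - p, X⟫_ℝ)) • (α - p) = 0 := by
  set L := Submodule.span ℝ ((fun α => α - p) '' (Rw : Set 𝔤)) with hL
  have hgen : ∀ α ∈ Rw, α - p ∈ L :=
    fun α hα => Submodule.subset_span ⟨α, Finset.mem_coe.2 hα, rfl⟩
  -- the function to minimize
  set g : ↥L → ℝ := fun Z => ∑ α ∈ Rw, k0 α * Real.exp (2 * ⟪α - p, (Z : 𝔤)⟫_ℝ) with hg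
  have hgcont : Continuous g := by
    apply continuous_finset_sum
    intro α _
    exact continuous_const.mul
      ((continuous_const.mul (continuous_const.inner continuous_subtype_val)).rexp)
  -- the max functional
  set M : ↥L → ℝ := fun u => Rw.sup' hne (fun α => ⟪α - p, (u : 𝔤)⟫_ℝ) with hM
  have hMcont : Continuous M := by
    have h := Continuous.finset_sup' (s := Rw)
      (f := fun α (u : ↥L) => ⟪α - p, (u : 𝔤)⟫_ℝ) hne
      (fun α _ => continuous_const.inner continuous_subtype_val)
    have he : M = Rw.sup' hne (fun α (u : ↥L) => ⟪α - p, (u : 𝔤)⟫_ℝ) := by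
      funext u
      simp only [hM]
      rw [Finset.sup'_apply]
    rw [he]
    exact h
  have hMpos : ∀ u : ↥L, u ≠ 0 → 0 < M u := by
    intro u hu
    by_contra hle
    push_neg at hle
    have hip0 : ∀ α ∈ Rw, ⟪α - p, (u : 𝔤)⟫_ℝ = 0 := by
      have hnonpos : ∀ α ∈ Rw, c α * ⟪α - p, (u : 𝔤)⟫_ℝ ≤ 0 := by
        intro α hα
        have h1 : ⟪α - p, (u : 𝔤)⟫_ℝ ≤ M u := by
          simp only [hM]
          exact Finset.le_sup' (fun β => ⟪β - p, (u : 𝔤)⟫_ℝ) hα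
        exact mul_nonpos_of_nonneg_of_nonpos (hc α hα).le (h1.trans hle)
      have hzero : ∑ α ∈ Rw, c α * ⟪α - p, (u : 𝔤)⟫_ℝ = 0 := by
        have : ∑ α ∈ Rw, c α * ⟪α - p, (u : 𝔤)⟫_ℝ
            = ⟪∑ α ∈ Rw, c α • (α - p), (u : 𝔤)⟫_ℝ := by
          rw [sum_inner]
          exact Finset.sum_congr rfl fun α _ => (real_inner_smul_left _ _ _).symm
        rw [this]
        have hsump : ∑ α ∈ Rw, c α • (α - p) = 0 := by
          simp only [smul_sub]
          rw [Finset.sum_sub_distrib, ← Finset.sum_smul, hc1, one_smul, ← hp, sub_self]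
        rw [hsump, inner_zero_left]
      intro α hα
      have := (Finset.sum_eq_zero_iff_of_nonpos hnonpos).1 hzero α hα
      have hcα := hc α hα
      nlinarith [this]
    have hP : ∀ y ∈ L, ⟪y, (u : 𝔤)⟫_ℝ = 0 := by
      intro y hy
      rw [hL] at hy
      induction hy using Submodule.span_induction with
      | mem y hy =>
        obtain ⟨α, hα, rfl⟩ := hy
        simpa using hip0 α (Finset.mem_coe.1 hα)
      | zero => exact inner_zero_left _
      | add y z _ _ h1 h2 => rw [inner_add_left, h1, h2, add_zero]
      | smul t y _ h1 => rw [real_inner_smul_left, h1, mul_zero]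
    have hself : (u : 𝔤) = 0 := by
      have h2 := hP _ u.2
      rwa [inner_self_eq_zero] at h2
    exact hu (Subtype.ext hself)
  -- existence of a minimizer
  have hmin : ∃ Z₀ : ↥L, ∀ Z : ↥L, g Z₀ ≤ g Z := by
    rcases subsingleton_or_nontrivial ↥L with hs | hnt
    · exact ⟨0, fun Z => le_of_eq (congrArg g (Subsingleton.elim 0 Z))⟩
    · -- minimum of M on the unit sphere
      have hsph : (Metric.sphere (0 : ↥L) 1).Nonempty :=
        NormedSpace.sphere_nonempty.2 zero_le_one
      obtain ⟨u₀, hu₀s, hu₀min⟩ := (isCompact_sphere (0 : ↥L) 1).exists_isMinOn hsph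
        hMcont.continuousOn
      set ε := M u₀ with hε
      have hu₀ne : u₀ ≠ 0 := by
        intro h
        have := mem_sphere_zero_iff_norm.1 hu₀s
        rw [h] at this; simp at this
      have hεpos : 0 < ε := hMpos u₀ hu₀ne
      -- lower bound M Z ≥ ε ‖Z‖
      have hMlb : ∀ Z : ↥L, ε * ‖Z‖ ≤ M Z := by
        intro Z
        rcases eq_or_ne Z 0 with rfl | hZ
        · simp only [norm_zero, mul_zero]
          obtain ⟨α, hα, hαe⟩ := Finset.exists_mem_eq_sup' hne
            (fun α => ⟪α - p, ((0 : ↥L) : 𝔤)⟫_ℝ)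
          rw [hM]
          simp only [Submodule.coe_zero, inner_zero_right]
          rw [Finset.sup'_const]
        · have hnZ : (0:ℝ) < ‖Z‖ := norm_pos_iff.2 hZ
          set u : ↥L := ‖Z‖⁻¹ • Z with hu
          have hus : u ∈ Metric.sphere (0 : ↥L) 1 := by
            rw [mem_sphere_zero_iff_norm, hu, norm_smul, norm_inv, norm_norm]
            exact inv_mul_cancel₀ hnZ.ne'
          have hεu : ε ≤ M u := hu₀min hus
          obtain ⟨α, hα, hαe⟩ := Finset.exists_mem_eq_sup' hne
            (fun α => ⟪α - p, (u : 𝔤)⟫_ℝ)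
          have h2 : M Z ≥ ⟪α - p, (Z : 𝔤)⟫_ℝ := by
            simp only [hM]
            exact Finset.le_sup' (fun β => ⟪β - p, (Z : 𝔤)⟫_ℝ) hα
          have h3 : ⟪α - p, (Z : 𝔤)⟫_ℝ = ‖Z‖ * ⟪α - p, (u : 𝔤)⟫_ℝ := by
            rw [hu]
            push_cast
            rw [real_inner_smul_right]
            rw [← mul_assoc, mul_inv_cancel₀ hnZ.ne', one_mul]
          have h4 : ε ≤ ⟪α - p, (u : 𝔤)⟫_ℝ := by
            have h4' := hεu
            simp only [hM] at h4'
            rwa [hαe] at h4'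
          calc ε * ‖Z‖ ≤ ⟪α - p, (u : 𝔤)⟫_ℝ * ‖Z‖ :=
                mul_le_mul_of_nonneg_right h4 hnZ.le
            _ = ⟪α - p, (Z : 𝔤)⟫_ℝ := by rw [h3]; ring
            _ ≤ M Z := h2
      -- lower bound for g
      set m0 := Rw.inf' hne k0 with hm0
      have hm0pos : 0 < m0 := by
        obtain ⟨α, hα, hαe⟩ := Finset.exists_mem_eq_inf' hne k0
        rw [hm0, hαe]; exact hk0 α hα
      have hglb : ∀ Z : ↥L, m0 * Real.exp (2 * (ε * ‖Z‖)) ≤ g Z := by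
        intro Z
        obtain ⟨α, hα, hαe⟩ := Finset.exists_mem_eq_sup' hne
          (fun α => ⟪α - p, (Z : 𝔤)⟫_ℝ)
        have h1 : m0 * Real.exp (2 * (ε * ‖Z‖)) ≤ k0 α * Real.exp (2 * ⟪α - p, (Z:𝔤)⟫_ℝ) := by
          apply mul_le_mul
          · exact Finset.inf'_le _ hα
          · apply Real.exp_le_exp.2
            have h5 : ε * ‖Z‖ ≤ M Z := hMlb Z
            simp only [hM] at h5
            rw [hαe] at h5
            linarith
          · exact (Real.exp_pos _).le
          · exact (hk0 α hα).le
        calc m0 * Real.exp (2 * (ε * ‖Z‖)) ≤ k0 α * Real.exp (2 * ⟪α - p, (Z:𝔤)⟫_ℝ) := h1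
          _ ≤ g Z := by
            rw [hg]
            apply Finset.single_le_sum (f := fun β => k0 β * Real.exp (2 * ⟪β - p, (Z:𝔤)⟫_ℝ))
              (fun β hβ => mul_nonneg (hk0 β hβ).le (Real.exp_pos _).le) hα
      -- coercivity via cocompact
      have hco : Filter.Tendsto (fun Z : ↥L => m0 * Real.exp (2 * (ε * ‖Z‖)))
          (Filter.cocompact ↥L) Filter.atTop := by
        have h1 : Filter.Tendsto (fun t : ℝ => m0 * Real.exp (2 * (ε * t)))
            Filter.atTop Filter.atTop := by
          apply Filter.Tendsto.const_mul_atTop hm0pos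
          apply Real.tendsto_exp_atTop.comp
          apply Filter.Tendsto.const_mul_atTop (by norm_num : (0:ℝ) < 2)
          exact (Filter.tendsto_id.const_mul_atTop hεpos)
        exact h1.comp tendsto_norm_cocompact_atTop
      have hco2 : ∀ᶠ Z in Filter.cocompact ↥L, g 0 ≤ g Z := by
        filter_upwards [hco.eventually_ge_atTop (g 0)] with Z hZ
        exact hZ.trans (hglb Z)
      obtain ⟨Z₀, hZ₀⟩ := hgcont.exists_forall_le' 0 hco2
      exact ⟨Z₀, hZ₀⟩
  obtain ⟨Z₀, hZ₀⟩ := hmin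
  refine ⟨(Z₀ : 𝔤), Z₀.2, ?_⟩
  -- Euler equation at the minimum
  set r : 𝔤 := ∑ α ∈ Rw, (k0 α * Real.exp (2 * ⟪α - p, (Z₀ : 𝔤)⟫_ℝ)) • (α - p) with hr
  have hrL : r ∈ L := Submodule.sum_mem _ fun α hα =>
    Submodule.smul_mem _ _ (hgen α hα)
  have hortho : ∀ u : ↥L, ⟪r, (u : 𝔤)⟫_ℝ = 0 := by
    intro u
    -- the one-variable function
    set φ : ℝ → ℝ := fun s => ∑ α ∈ Rw,
      k0 α * Real.exp (2 * ⟪α - p, (Z₀ : 𝔤)⟫_ℝ + s * (2 * ⟪α - p, (u : 𝔤)⟫_ℝ)) with hφ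
    have hφeq : ∀ s : ℝ, φ s = g (Z₀ + s • u) := by
      intro s
      rw [hφ, hg]
      apply Finset.sum_congr rfl
      intro α _
      congr 2
      push_cast
      rw [inner_add_right, real_inner_smul_right]
      ring
    have hlocmin : IsLocalMin φ 0 := by
      apply IsMinOn.isLocalMin _ (Filter.univ_mem)
      intro s _
      show φ 0 ≤ φ s
      rw [hφeq s, hφeq 0]
      simp only [zero_smul, add_zero]
      exact hZ₀ _
    have hderiv : HasDerivAt φ
        (∑ α ∈ Rw, k0 α * (Real.exp (2 * ⟪α - p, (Z₀ : 𝔤)⟫_ℝ)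
          * (2 * ⟪α - p, (u : 𝔤)⟫_ℝ))) 0 := by
      rw [hφ]
      apply HasDerivAt.fun_sum
      intro α _
      have h1 : HasDerivAt (fun s : ℝ => 2 * ⟪α - p, (Z₀:𝔤)⟫_ℝ + s * (2 * ⟪α - p, (u:𝔤)⟫_ℝ))
          (2 * ⟪α - p, (u : 𝔤)⟫_ℝ) 0 := by
        simpa using ((hasDerivAt_id (0:ℝ)).mul_const (2 * ⟪α - p, (u:𝔤)⟫_ℝ)).const_add
          (2 * ⟪α - p, (Z₀:𝔤)⟫_ℝ)
      have h2 := (h1.exp).const_mul (k0 α)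
      simp only [zero_mul, add_zero] at h2
      exact h2
    have hzero := hlocmin.hasDerivAt_eq_zero hderiv
    have hzero' : ∑ α ∈ Rw, (k0 α * Real.exp (2 * ⟪α - p, (Z₀ : 𝔤)⟫_ℝ))
        * ⟪α - p, (u : 𝔤)⟫_ℝ = 0 := by
      have h3 : ∑ α ∈ Rw, k0 α * (Real.exp (2 * ⟪α - p, (Z₀ : 𝔤)⟫_ℝ)
          * (2 * ⟪α - p, (u : 𝔤)⟫_ℝ))
          = 2 * ∑ α ∈ Rw, (k0 α * Real.exp (2 * ⟪α - p, (Z₀ : 𝔤)⟫_ℝ))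
            * ⟪α - p, (u : 𝔤)⟫_ℝ := by
        rw [Finset.mul_sum]
        exact Finset.sum_congr rfl fun α _ => by ring
      rw [h3] at hzero
      linarith
    rw [hr, sum_inner, ← hzero']
    apply Finset.sum_congr rfl
    intro α _
    rw [real_inner_smul_left]
  have h7 : ⟪r, r⟫_ℝ = 0 := hortho ⟨r, hrL⟩
  rw [inner_self_eq_zero] at h7
  exact h7

/-- if `W` is a nice space, `w ∈ W∖{0}`, `0` is not in the convex hull of
`R(w)` and the Gram matrix `U` of `R(w)` admits a positive solution of `Ux = [1]`, then
`mcc(R(w))` lies in the intrinsic interior of the convex hull of `R(w)` and the orbit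
of `w` is distinguished. -/
theorem distinguished_of_gram_positive_solution_one
    {𝔤 V : Type*} [NormedAddCommGroup 𝔤] [InnerProductSpace ℝ 𝔤] [FiniteDimensional ℝ 𝔤]
    [NormedAddCommGroup V] [InnerProductSpace ℝ V] [FiniteDimensional ℝ V]
    -- the Lie bracket of `𝔤` and the representation `π : 𝔤 → 𝔤𝔩(V)`:
    (bk : 𝔤 →ₗ[ℝ] 𝔤 →ₗ[ℝ] 𝔤)
    (hbk_alt : ∀ X : 𝔤, bk X X = 0)
    (hbk_jac : ∀ X Y Z : 𝔤, bk X (bk Y Z) + bk Y (bk Z X) + bk Z (bk X Y) = 0)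
    (π : 𝔤 →ₗ[ℝ] V →L[ℝ] V)
    (hrep : ∀ X Y : 𝔤, π (bk X Y) = π X * π Y - π Y * π X)
    -- `𝔞` is an abelian subalgebra acting by self-adjoint operators:
    (𝔞 : Submodule ℝ 𝔤)
    (hab : ∀ X ∈ 𝔞, ∀ Y ∈ 𝔞, bk X Y = 0)
    (hsa : ∀ X ∈ 𝔞, ∀ v w : V, ⟪(π X) v, w⟫_ℝ = ⟪v, (π X) w⟫_ℝ)
    -- roots and weights:
    (Δ𝔤 : Finset 𝔤) (hΔ𝔤 : ∀ γ ∈ Δ𝔤, γ ∈ 𝔞 ∧ γ ≠ 0)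
    (ΔV : Finset 𝔤) (hΔV : ∀ α ∈ ΔV, α ∈ 𝔞)
    -- `𝔤₀ = 𝔞 ⊕ 𝔪` is the centralizer of `𝔞`, `π` is skew-adjoint on `𝔪`:
    (𝔪 : Submodule ℝ 𝔤)
    (hskew : ∀ Y ∈ 𝔪, ∀ v w : V, ⟪(π Y) v, w⟫_ℝ = -⟪v, (π Y) w⟫_ℝ)
    (h𝔞𝔪 : ∀ X ∈ 𝔞, ∀ Y ∈ 𝔪, ⟪X, Y⟫_ℝ = 0)
    (h𝔤₀ : ∀ Z : 𝔤, (∀ X ∈ 𝔞, bk X Z = 0) ↔ Z ∈ 𝔞 ⊔ 𝔪)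
    -- the orthogonal restricted-root space decomposition of `𝔤`:
    (h𝔤dec : (𝔞 ⊔ 𝔪) ⊔ (⨆ γ ∈ Δ𝔤, rootSpace bk 𝔞 γ) = ⊤)
    (h𝔤orth : ∀ γ ∈ Δ𝔤, ∀ Y ∈ rootSpace bk 𝔞 γ, ∀ Z : 𝔤,
      (Z ∈ 𝔞 ⊔ 𝔪 ∨ ∃ γ' ∈ Δ𝔤, γ' ≠ γ ∧ Z ∈ rootSpace bk 𝔞 γ') → ⟪Y, Z⟫_ℝ = 0)
    -- the weight space decomposition of `V`:
    (hVdec : (⨆ α ∈ ΔV, wtSpace π 𝔞 α) = ⊤)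
    (W : Submodule ℝ V) (hW : IsNiceSpace π 𝔞 W)
    (w : V) (hw : w ∈ W) (hw0 : w ≠ 0)
    -- `cc α` is the component of `w` in the weight space `V_α`:
    (cc : 𝔤 → V) (hcc : ∀ α ∈ ΔV, cc α ∈ wtSpace π 𝔞 α) (hwsum : w = ∑ α ∈ ΔV, cc α)
    (Rw : Finset 𝔤) (hRw : Rw = ΔV.filter fun α => cc α ≠ 0)
    -- `mcc` is the (unique) point of minimal norm in the convex hull of `R(w)`:
    (mcc : 𝔤) (hmcc₁ : mcc ∈ convexHull ℝ (Rw : Set 𝔤))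
    (hmcc₂ : ∀ y ∈ convexHull ℝ (Rw : Set 𝔤), ‖mcc‖ ≤ ‖y‖)
    (h0 : (0 : 𝔤) ∉ convexHull ℝ (Rw : Set 𝔤))
    -- a positive solution `x` of the Gram system `U x = (1,…,1)ᵀ`:
    (x : 𝔤 → ℝ) (hxpos : ∀ α ∈ Rw, 0 < x α)
    (hGram : ∀ α ∈ Rw, ∑ β ∈ Rw, ⟪α, β⟫_ℝ * x β = 1)
    :
    mcc ∈ intrinsicInterior ℝ (convexHull ℝ (Rw : Set 𝔤)) ∧
    ∃ X ∈ 𝔞,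
      (π (momentMap π ((NormedSpace.exp (π X)) w))) ((NormedSpace.exp (π X)) w) =
        (‖momentMap π ((NormedSpace.exp (π X)) w)‖ ^ 2) • (NormedSpace.exp (π X)) w := by
  classical
  -- membership extraction for Rw
  have hRwsub : ∀ α ∈ Rw, α ∈ ΔV := by
    intro α hα; rw [hRw] at hα; exact (Finset.mem_filter.1 hα).1
  have hccne : ∀ α ∈ Rw, cc α ≠ 0 := by
    intro α hα; rw [hRw] at hα; exact (Finset.mem_filter.1 hα).2
  have hcc0 : ∀ α ∈ ΔV, α ∉ Rw → cc α = 0 := by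
    intro α hα hn
    by_contra h
    exact hn (hRw ▸ Finset.mem_filter.2 ⟨hα, h⟩)
  have hα𝔞 : ∀ α ∈ Rw, α ∈ 𝔞 := fun α hα => hΔV α (hRwsub α hα)
  have hne : Rw.Nonempty := by
    rw [Finset.nonempty_iff_ne_empty]
    intro hemp
    apply hw0
    rw [hwsum]
    apply Finset.sum_eq_zero
    intro α hα
    by_contra h
    have : α ∈ Rw := hRw ▸ Finset.mem_filter.2 ⟨hα, h⟩
    rw [hemp] at this
    exact absurd this (Finset.notMem_empty α)
  -- weight space action of elements of 𝔞
  have hwtact : ∀ α ∈ ΔV, ∀ X ∈ 𝔞, (π X) (cc α) = ⟪α, X⟫_ℝ • cc α := by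
    intro α hα X hX
    exact hcc α hα X hX
  -- orthogonality of distinct weight components
  have horthcc : ∀ α ∈ ΔV, ∀ β ∈ ΔV, α ≠ β → ⟪cc α, cc β⟫_ℝ = 0 := by
    intro α hα β hβ hαβ
    have hZ : α - β ∈ 𝔞 := sub_mem (hΔV α hα) (hΔV β hβ)
    have h1 : ⟪(π (α - β)) (cc α), cc β⟫_ℝ = ⟪cc α, (π (α - β)) (cc β)⟫_ℝ :=
      hsa _ hZ _ _
    rw [hwtact α hα _ hZ, hwtact β hβ _ hZ, real_inner_smul_left,
      real_inner_smul_right] at h1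
    have h2 : ⟪α, α - β⟫_ℝ - ⟪β, α - β⟫_ℝ = ⟪α - β, α - β⟫_ℝ := by
      rw [inner_sub_left]
    have h3 : ⟪α - β, α - β⟫_ℝ ≠ 0 :=
      fun h => (sub_ne_zero.2 hαβ) (inner_self_eq_zero.1 h)
    have h4 : (⟪α, α - β⟫_ℝ - ⟪β, α - β⟫_ℝ) * ⟪cc α, cc β⟫_ℝ = 0 := by
      rw [sub_mul, h1]; ring
    rw [h2] at h4
    rcases mul_eq_zero.1 h4 with h | h
    · exact absurd h h3
    · exact h
  -- the convex combination p
  have hsumx : 0 < ∑ α ∈ Rw, x α := Finset.sum_pos hxpos hne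
  set t : ℝ := (∑ α ∈ Rw, x α)⁻¹ with ht
  have htpos : 0 < t := inv_pos.2 hsumx
  set c : 𝔤 → ℝ := fun α => t * x α with hcdef
  have hcpos : ∀ α ∈ Rw, 0 < c α := fun α hα => mul_pos htpos (hxpos α hα)
  have hcsum : ∑ α ∈ Rw, c α = 1 := by
    simp only [hcdef]
    rw [← Finset.mul_sum, ht, inv_mul_cancel₀ hsumx.ne']
  set p : 𝔤 := ∑ α ∈ Rw, c α • α with hpdef
  -- inner products with p
  have hαp : ∀ α ∈ Rw, ⟪α, p⟫_ℝ = t := by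
    intro α hα
    rw [hpdef, inner_sum]
    have : ∀ β ∈ Rw, ⟪α, c β • β⟫_ℝ = t * (⟪α, β⟫_ℝ * x β) := by
      intro β hβ
      rw [real_inner_smul_right, hcdef]
      ring
    rw [Finset.sum_congr rfl this, ← Finset.mul_sum, hGram α hα, mul_one]
  have hpp : ⟪p, p⟫_ℝ = t := by
    nth_rewrite 1 [hpdef]
    rw [sum_inner]
    have : ∀ α ∈ Rw, ⟪c α • α, p⟫_ℝ = c α * t := by
      intro α hα
      rw [real_inner_smul_left, hαp α hα]
    rw [Finset.sum_congr rfl this, ← Finset.sum_mul, hcsum, one_mul]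
  have hphull : p ∈ convexHull ℝ (Rw : Set 𝔤) := by
    have h1 := Rw.centerMass_mem_convexHull (s := (Rw : Set 𝔤)) (w := c)
      (fun i hi => (hcpos i hi).le) (by rw [hcsum]; norm_num) (z := id)
      (fun i hi => Finset.mem_coe.2 hi)
    have h2 : Rw.centerMass c id = p := by
      rw [Finset.centerMass_eq_of_sum_1 _ _ hcsum]; simp [hpdef]
    rwa [h2] at h1
  have hpne : p ≠ 0 := fun h => h0 (h ▸ hphull)
  have htval : 0 < ⟪p, p⟫_ℝ :=
    lt_of_le_of_ne real_inner_self_nonneg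
      (fun h => hpne (inner_self_eq_zero.1 h.symm))
  have hpnorm : ‖p‖ ^ 2 = t := by
    rw [← real_inner_self_eq_norm_sq, hpp]
  -- all of the hull pairs to t against p
  have hyp_inner : ∀ y ∈ convexHull ℝ (Rw : Set 𝔤), ⟪p, y⟫_ℝ = t := by
    intro y hy
    have hconv : Convex ℝ {z : 𝔤 | ⟪p, z⟫_ℝ = t} := by
      intro z1 h1 z2 h2 a b ha hb hab
      simp only [Set.mem_setOf_eq] at h1 h2 ⊢
      rw [inner_add_right, real_inner_smul_right, real_inner_smul_right, h1, h2]
      nlinarith [hab]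
    have hsub : (Rw : Set 𝔤) ⊆ {z : 𝔤 | ⟪p, z⟫_ℝ = t} := by
      intro z hz
      simp only [Set.mem_setOf_eq]
      rw [real_inner_comm]
      exact hαp z (Finset.mem_coe.1 hz)
    exact convexHull_min hsub hconv hy
  -- p is the minimal norm point, so mcc = p
  have hmcceq : mcc = p := by
    have h1 : ⟪p, mcc⟫_ℝ = t := hyp_inner mcc hmcc₁
    have h2 : ‖mcc‖ ≤ ‖p‖ := hmcc₂ p hphull
    have h3 : ⟪p - mcc, p - mcc⟫_ℝ = ⟪p, p⟫_ℝ - 2 * ⟪p, mcc⟫_ℝ + ⟪mcc, mcc⟫_ℝ := by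
      rw [inner_sub_left, inner_sub_right, inner_sub_right, real_inner_comm mcc p]
      ring
    have h4 : ⟪mcc, mcc⟫_ℝ ≤ t := by
      rw [real_inner_self_eq_norm_sq]
      rw [← hpnorm]
      have := norm_nonneg mcc
      nlinarith
    have h5 : ⟪p - mcc, p - mcc⟫_ℝ ≤ 0 := by
      rw [h3, hpp, h1]; linarith
    have h6 : ⟪p - mcc, p - mcc⟫_ℝ = 0 :=
      le_antisymm h5 real_inner_self_nonneg
    have := inner_self_eq_zero.1 h6
    have := sub_eq_zero.1 this
    exact this.symm
  constructor
  · rw [hmcceq]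
    exact centerMass_mem_intrinsicInterior Rw c hcpos hcsum p hpdef
  · -- part 2: the distinguished orbit
    have hp𝔞 : p ∈ 𝔞 := by
      rw [hpdef]
      exact Submodule.sum_mem _ fun α hα => Submodule.smul_mem _ _ (hα𝔞 α hα)
    obtain ⟨X, hXL, hXeq⟩ := gram_min_exists Rw hne p c hcpos hpdef hcsum
      (fun α => ‖cc α‖ ^ 2)
      (fun α hα => pow_pos (norm_pos_iff.2 (hccne α hα)) 2)
    have hX𝔞 : X ∈ 𝔞 := by
      have hle : Submodule.span ℝ ((fun α => α - p) '' (Rw : Set 𝔤)) ≤ 𝔞 := by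
        rw [Submodule.span_le]
        rintro _ ⟨α, hα, rfl⟩
        exact sub_mem (hα𝔞 α (Finset.mem_coe.1 hα)) hp𝔞
      exact hle hXL
    -- the weights K
    set K : 𝔤 → ℝ := fun α => Real.exp (2 * ⟪α, X⟫_ℝ) * ‖cc α‖ ^ 2 with hKdef
    have hKpos : ∀ α ∈ Rw, 0 < K α := by
      intro α hα
      simp only [hKdef]
      exact mul_pos (Real.exp_pos _) (pow_pos (norm_pos_iff.2 (hccne α hα)) 2)
    have hK0 : ∀ α ∈ ΔV, α ∉ Rw → K α = 0 := by
      intro α hα hn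
      simp only [hKdef]
      rw [hcc0 α hα hn]
      simp
    set C : ℝ := Real.exp (2 * ⟪p, X⟫_ℝ) with hCdef
    have hKfact : ∀ α : 𝔤,
        K α = C * (‖cc α‖ ^ 2 * Real.exp (2 * ⟪α - p, X⟫_ℝ)) := by
      intro α
      simp only [hKdef, hCdef, inner_sub_left]
      rw [show (2:ℝ) * (⟪α, X⟫_ℝ - ⟪p, X⟫_ℝ)
          = 2 * ⟪α, X⟫_ℝ - 2 * ⟪p, X⟫_ℝ from by ring, Real.exp_sub]
      field_simp
    -- ∑ K α • α = (∑ K α) • p over Rw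
    have hsubeq : ∑ α ∈ Rw, (‖cc α‖ ^ 2 * Real.exp (2 * ⟪α - p, X⟫_ℝ)) • α
        = (∑ α ∈ Rw, ‖cc α‖ ^ 2 * Real.exp (2 * ⟪α - p, X⟫_ℝ)) • p := by
      have h1 := hXeq
      simp only [smul_sub] at h1
      rw [Finset.sum_sub_distrib, ← Finset.sum_smul] at h1
      exact sub_eq_zero.1 h1
    have hKsum : ∑ α ∈ Rw, K α • α = (∑ α ∈ Rw, K α) • p := by
      calc ∑ α ∈ Rw, K α • α
          = C • ∑ α ∈ Rw, (‖cc α‖ ^ 2 * Real.exp (2 * ⟪α - p, X⟫_ℝ)) • α := by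
            rw [Finset.smul_sum]
            exact Finset.sum_congr rfl fun α _ => by rw [smul_smul, ← hKfact α]
        _ = C • ((∑ α ∈ Rw, ‖cc α‖ ^ 2 * Real.exp (2 * ⟪α - p, X⟫_ℝ)) • p) := by
            rw [hsubeq]
        _ = (∑ α ∈ Rw, K α) • p := by
            rw [smul_smul]
            congr 1
            rw [Finset.mul_sum]
            exact Finset.sum_congr rfl fun α _ => (hKfact α).symm
    refine ⟨X, hX𝔞, ?_⟩
    set wt : V := NormedSpace.exp (π X) w with hwt
    have hwteq : wt = ∑ α ∈ ΔV, Real.exp ⟪α, X⟫_ℝ • cc α := by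
      rw [hwt, hwsum, map_sum]
      exact Finset.sum_congr rfl fun α hα =>
        exp_apply_eigenvector (π X) (cc α) ⟪α, X⟫_ℝ (hwtact α hα X hX𝔞)
    have hwtW : wt ∈ W := by
      rw [hwt]
      exact exp_mem_of_invariant (π X) W (fun v hv => hW.1 X hX𝔞 v hv) w hw
    have hwtne : wt ≠ 0 := by
      rw [hwt]
      exact exp_apply_ne_zero (π X) w hw0
    set m : 𝔤 := momentMap π wt with hm
    have hm𝔞 : m ∈ 𝔞 := hW.2 wt hwtW hwtne
    -- diagonal inner products
    have horthdd : ∀ α ∈ ΔV, ⟪cc α, wt⟫_ℝ = Real.exp ⟪α, X⟫_ℝ * ‖cc α‖ ^ 2 := by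
      intro α hα
      rw [hwteq, inner_sum]
      rw [Finset.sum_eq_single α]
      · rw [real_inner_smul_right, real_inner_self_eq_norm_sq]
      · intro β hβ hβα
        rw [real_inner_smul_right, horthcc α hα β hβ (Ne.symm hβα), mul_zero]
      · intro h
        exact absurd hα h
    have hnorm : ‖wt‖ ^ 2 = ∑ α ∈ ΔV, K α := by
      rw [← real_inner_self_eq_norm_sq]
      nth_rewrite 1 [hwteq]
      rw [sum_inner]
      refine Finset.sum_congr rfl fun α hα => ?_
      rw [real_inner_smul_left, horthdd α hα]
      simp only [hKdef]
      rw [two_mul, Real.exp_add]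
      ring
    have hKsumΔ : ∑ α ∈ ΔV, K α = ∑ α ∈ Rw, K α := by
      symm
      apply Finset.sum_subset hRwsub
      intro α hα hn
      exact hK0 α hα hn
    have hNpos : 0 < ∑ α ∈ Rw, K α := Finset.sum_pos hKpos hne
    -- the action of elements of 𝔞 on wt
    have hact : ∀ Y ∈ 𝔞, (π Y) wt
        = ∑ α ∈ ΔV, ⟪α, Y⟫_ℝ • (Real.exp ⟪α, X⟫_ℝ • cc α) := by
      intro Y hY
      rw [hwteq, map_sum]
      refine Finset.sum_congr rfl fun α hα => ?_
      rw [map_smul, hwtact α hα Y hY, smul_comm]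
    have hip : ∀ Y ∈ 𝔞, ⟪(π Y) wt, wt⟫_ℝ = ∑ α ∈ ΔV, K α * ⟪α, Y⟫_ℝ := by
      intro Y hY
      rw [hact Y hY, sum_inner]
      refine Finset.sum_congr rfl fun α hα => ?_
      rw [real_inner_smul_left, real_inner_smul_left, horthdd α hα]
      simp only [hKdef]
      rw [two_mul, Real.exp_add]
      ring
    have hmY : ∀ Y : 𝔤, ⟪m, Y⟫_ℝ = ⟪(π Y) wt, wt⟫_ℝ / ‖wt‖ ^ 2 := by
      intro Y
      rw [hm]
      exact momentMap_inner π wt Y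
    -- m = p
    have hmp : ∀ Y ∈ 𝔞, ⟪m - p, Y⟫_ℝ = 0 := by
      intro Y hY
      have h1 : ∑ α ∈ ΔV, K α * ⟪α, Y⟫_ℝ = ∑ α ∈ Rw, K α * ⟪α, Y⟫_ℝ := by
        symm
        apply Finset.sum_subset hRwsub
        intro α hα hn
        rw [hK0 α hα hn, zero_mul]
      have h2 : ∑ α ∈ Rw, K α * ⟪α, Y⟫_ℝ = (∑ α ∈ Rw, K α) * ⟪p, Y⟫_ℝ := by
        have h3 := congrArg (fun z : 𝔤 => ⟪z, Y⟫_ℝ) hKsum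
        simp only [sum_inner, real_inner_smul_left] at h3
        exact h3
      rw [inner_sub_left, hmY Y, hip Y hY, h1, h2, hnorm, hKsumΔ]
      rw [mul_comm, mul_div_assoc, div_self hNpos.ne', mul_one, sub_self]
    have hmeq : m = p := by
      have h4 := hmp (m - p) (sub_mem hm𝔞 hp𝔞)
      rw [inner_self_eq_zero] at h4
      exact sub_eq_zero.1 h4
    -- conclusion
    have h5 : (π p) wt = t • wt := by
      rw [hwteq, map_sum, Finset.smul_sum]
      refine Finset.sum_congr rfl fun α hα => ?_
      rw [map_smul, hwtact α hα p hp𝔞]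
      by_cases hαR : α ∈ Rw
      · rw [hαp α hαR, smul_comm]
      · rw [hcc0 α hα hαR]
        simp
    show (π m) wt = ‖m‖ ^ 2 • wt
    rw [hmeq, h5]
    congr 1
    rw [hpnorm]
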